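/- For every n ∈ ℕ and every z ∈ ℕ with 0 ≤ z < 2^n, Σ_{x=0}^{2^n-1} i^{w(x)} (-1)^{z·x} = (-i)^{w(z)} · (1+i)^n, where the sum is taken in ℂ. (This unifies the even and odd cases: for n = 2m the right-hand side equals (-1)^{w(z)} i^{m+w(z)} 2^m, and for n = 2m+1 it equals (-1)^{w(z)} i^{m+w(z)} 2^m (1+i).) -/
import Mathlib


open Finset

/-- Hamming weight of a natural number: number of 1s in its binary representation. -/
def hw (x : ℕ) : ℕ := (Nat.digits 2 x).sum

/-- The `j`-th bit of `z`, as a natural number in `{0,1}`. -/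
def nbit (z j : ℕ) : ℕ := if z.testBit j then 1 else 0

/-- Partial bitwise dot product `∑_{j=0}^{n-1} z_j x_j`. -/
def ndot (n z x : ℕ) : ℕ := ∑ j ∈ Finset.range n, nbit z j * nbit x j

lemma hw_rec (x : ℕ) (hx : x ≠ 0) : hw x = x % 2 + hw (x / 2) := by
  unfold hw
  rw [Nat.digits_def' (by norm_num : 1 < 2) (Nat.pos_of_ne_zero hx)]
  simp

lemma hw_rec' (x : ℕ) : hw x = x % 2 + hw (x / 2) := by
  rcases eq_or_ne x 0 with rfl | h
  · simp [hw]
  · exact hw_rec x h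

lemma hw_add_pow (n x : ℕ) (hx : x < 2 ^ n) : hw (x + 2 ^ n) = hw x + 1 := by
  induction n generalizing x with
  | zero =>
    interval_cases x
    simp [hw]
  | succ n ih =>
    rw [hw_rec (x + 2 ^ (n + 1)) (by positivity)]
    have h1 : (x + 2 ^ (n + 1)) % 2 = x % 2 := by
      omega
    have h2 : (x + 2 ^ (n + 1)) / 2 = x / 2 + 2 ^ n := by
      omega
    have h3 : x / 2 < 2 ^ n := by
      have := Nat.pow_succ 2 n
      omega
    rw [h1, h2, ih _ h3, hw_rec' x]
    ring

lemma nbit_high (n x : ℕ) (hx : x < 2 ^ n) : nbit (x + 2 ^ n) n = 1 := by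
  unfold nbit
  have : (x + 2 ^ n) / 2 ^ n = 1 := by
    rw [Nat.add_div_right _ (Nat.two_pow_pos n), Nat.div_eq_of_lt hx]
  rw [Nat.testBit_eq_decide_div_mod_eq, this]
  simp

lemma nbit_low (n x j : ℕ) (hx : x < 2 ^ n) (hj : j < n) :
    nbit (x + 2 ^ n) j = nbit x j := by
  unfold nbit
  have h1 : (x + 2 ^ n).testBit j = ((x + 2 ^ n) % 2 ^ n).testBit j := by
    rw [Nat.testBit_mod_two_pow]
    simp [hj]
  have h2 : (x + 2 ^ n) % 2 ^ n = x := by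
    rw [Nat.add_mod_right, Nat.mod_eq_of_lt hx]
  rw [h1, h2]

lemma nbit_mod (n z j : ℕ) (hj : j < n) : nbit (z % 2 ^ n) j = nbit z j := by
  unfold nbit
  rw [Nat.testBit_mod_two_pow]
  simp [hj]

lemma nbit_of_lt (n z : ℕ) (hz : z < 2 ^ n) : nbit z n = 0 := by
  unfold nbit
  rw [Nat.testBit_lt_two_pow hz]
  simp

lemma hw_split (n z : ℕ) (hz : z < 2 ^ (n + 1)) :
    hw z = hw (z % 2 ^ n) + nbit z n := by
  by_cases h : z < 2 ^ n
  · rw [Nat.mod_eq_of_lt h, nbit_of_lt n z h]; ring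
  · have h1 : z - 2 ^ n < 2 ^ n := by
      have := Nat.pow_succ 2 n
      omega
    have h2 : z % 2 ^ n = z - 2 ^ n := by
      rw [Nat.mod_eq_sub_mod (by omega), Nat.mod_eq_of_lt h1]
    have h3 : z = (z - 2 ^ n) + 2 ^ n := by omega
    have e1 := hw_add_pow n _ h1
    have e2 := nbit_high n _ h1
    rw [← h3] at e1 e2
    rw [h2, e1, e2]

theorem stmt_4 (n : ℕ) (z : ℕ) (hz : z < 2 ^ n) :
    ∑ x ∈ Finset.range (2 ^ n), Complex.I ^ hw x * (-1) ^ ndot n z x =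
      (-Complex.I) ^ hw z * (1 + Complex.I) ^ n := by
  induction n generalizing z with
  | zero =>
    interval_cases z
    simp [hw, ndot]
  | succ n ih =>
    have hzn : z % 2 ^ n < 2 ^ n := Nat.mod_lt _ (Nat.two_pow_pos n)
    have h2 : (2 : ℕ) ^ (n + 1) = 2 ^ n + 2 ^ n := by ring
    rw [h2, Finset.sum_range_add]
    -- first sum
    have hsum1 : ∑ x ∈ Finset.range (2 ^ n), Complex.I ^ hw x * (-1) ^ ndot (n + 1) z x
        = (-Complex.I) ^ hw (z % 2 ^ n) * (1 + Complex.I) ^ n := by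
      rw [← ih (z % 2 ^ n) hzn]
      refine Finset.sum_congr rfl fun x hx => ?_
      rw [Finset.mem_range] at hx
      have : ndot (n + 1) z x = ndot n (z % 2 ^ n) x := by
        unfold ndot
        rw [Finset.sum_range_succ, nbit_of_lt n x hx, mul_zero, add_zero]
        exact Finset.sum_congr rfl fun j hj =>
          by rw [nbit_mod n z j (Finset.mem_range.mp hj)]
      rw [this]
    have hsum2 : ∑ x ∈ Finset.range (2 ^ n),
          Complex.I ^ hw (2 ^ n + x) * (-1) ^ ndot (n + 1) z (2 ^ n + x)
        = Complex.I * (-1) ^ nbit z n *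
            ((-Complex.I) ^ hw (z % 2 ^ n) * (1 + Complex.I) ^ n) := by
      rw [← ih (z % 2 ^ n) hzn, Finset.mul_sum]
      refine Finset.sum_congr rfl fun x hx => ?_
      rw [Finset.mem_range] at hx
      have e1 : hw (2 ^ n + x) = hw x + 1 := by
        rw [Nat.add_comm]; exact hw_add_pow n x hx
      have e2 : ndot (n + 1) z (2 ^ n + x) = ndot n (z % 2 ^ n) x + nbit z n := by
        unfold ndot
        rw [Finset.sum_range_succ, Nat.add_comm (2 ^ n) x, nbit_high n x hx, mul_one]
        congr 1
        exact Finset.sum_congr rfl fun j hj => by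
          rw [nbit_low n x j hx (Finset.mem_range.mp hj),
            nbit_mod n z j (Finset.mem_range.mp hj)]
      rw [e1, e2, pow_add, pow_succ]
      ring
    rw [hsum1, hsum2, hw_split n z hz, pow_add, pow_succ]
    rcases Nat.eq_zero_or_pos (nbit z n) with h | h
    · rw [h]; ring
    · have hb : nbit z n = 1 := by
        unfold nbit at h ⊢; by_cases hb : z.testBit n <;> simp [hb] at h ⊢
      rw [hb]
      linear_combination ((-Complex.I) ^ hw (z % 2 ^ n) * (1 + Complex.I) ^ n) *
        Complex.I_sq
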